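/- With b₁ = b₂ = 0 and β⁴α(1-α) < 1, the origin (0,0) is the unique stationary point of RS in [0,1)², and RS(0,0) = min_{q₂∈[0,1)} max_{q₁∈[0,1)} RS(q₁,q₂). -/

import Mathlib

noncomputable def rrS (k t : ℝ) : ℝ := Real.sqrt (1 + 4 * (k * t))
noncomputable def rr (k t : ℝ) : ℝ := (rrS k t - 1) / (rrS k t + 1)

noncomputable def RSfun (α β q₁ q₂ : ℝ) : ℝ :=
  β ^ 2 * α * (1 - α) / 2 * (1 - q₁) * (1 - q₂)
  + β ^ 2 * α * (1 - α) / 2 * (q₂ * (1 - rr (β ^ 2 * (1 - α)) q₂) + q₁ * (1 - rr (β ^ 2 * α) q₁))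
  + α / 2 * (rr (β ^ 2 * (1 - α)) q₂ / (1 - rr (β ^ 2 * (1 - α)) q₂)
      + Real.log (1 - rr (β ^ 2 * (1 - α)) q₂))
  + (1 - α) / 2 * (rr (β ^ 2 * α) q₁ / (1 - rr (β ^ 2 * α) q₁)
      + Real.log (1 - rr (β ^ 2 * α) q₁))

lemma rrS_hasDerivAt (k q : ℝ) (hpos : 0 < 1 + 4 * (k * q)) :
    HasDerivAt (rrS k) (2 * k / rrS k q) q := by
  have h : HasDerivAt (fun t : ℝ => 1 + 4 * (k * t)) (4 * k) q := by
    simpa using ((hasDerivAt_id q).const_mul k).const_mul (4:ℝ) |>.const_add 1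
  have := h.sqrt (by positivity)
  refine this.congr_deriv (Eq.symm ?_)
  unfold rrS
  rw [div_eq_div_iff (by positivity) (by positivity)]
  ring

lemma rrS_sq (k q : ℝ) (hpos : 0 ≤ 1 + 4 * (k * q)) : rrS k q ^ 2 = 1 + 4 * (k * q) := by
  unfold rrS; rw [Real.sq_sqrt hpos]

lemma rrS_one_le (k q : ℝ) (h : 0 ≤ k * q) : 1 ≤ rrS k q := by
  have h1 : (0:ℝ) ≤ rrS k q := Real.sqrt_nonneg _
  have h2 := rrS_sq k q (by linarith)
  nlinarith

lemma rr_nonneg (k q : ℝ) (h : 0 ≤ k * q) : 0 ≤ rr k q := by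
  have := rrS_one_le k q h
  unfold rr; apply div_nonneg <;> linarith

lemma rr_lt_one (k q : ℝ) (h : 0 ≤ k * q) : rr k q < 1 := by
  have := rrS_one_le k q h
  unfold rr
  rw [div_lt_one (by linarith)]; linarith

lemma rr_le (k q : ℝ) (h : 0 ≤ k * q) : rr k q ≤ k * q := by
  have h1 := rrS_one_le k q h
  have h2 := rrS_sq k q (by linarith)
  unfold rr
  rw [div_le_iff₀ (by linarith)]
  nlinarith [sq_nonneg (rrS k q - 1)]

lemma rr_zero (k : ℝ) : rr k 0 = 0 := by
  unfold rr rrS; simp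

lemma rr_hasDerivAt (k q : ℝ) (hk : 0 ≤ k * q) (hpos : 0 < 1 + 4 * (k * q)) :
    HasDerivAt (rr k) (4 * k / (rrS k q * (rrS k q + 1) ^ 2)) q := by
  have hs1 := rrS_one_le k q hk
  have hs0 : rrS k q ≠ 0 := by linarith
  have hS := rrS_hasDerivAt k q hpos
  have h := ((hS.sub_const 1).div (hS.add_const 1) (by linarith))
  refine h.congr_deriv (Eq.symm ?_)
  field_simp
  ring

lemma phi_hasDerivAt (k q : ℝ) (hk : 0 ≤ k * q) (hpos : 0 < 1 + 4 * (k * q)) :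
    HasDerivAt (fun t => rr k t / (1 - rr k t) + Real.log (1 - rr k t))
      (k * (rrS k q - 1) / (rrS k q * (rrS k q + 1))) q := by
  have hs1 := rrS_one_le k q hk
  have hs0 : rrS k q ≠ 0 := by linarith
  have hs0' : rrS k q + 1 ≠ 0 := by linarith
  have hr1 : rr k q < 1 := rr_lt_one k q hk
  have hr := rr_hasDerivAt k q hk hpos
  have h1 := hr.div ((hr.const_sub 1)) (by linarith)
  have h2 := ((hr.const_sub 1)).log (by linarith)
  have h := h1.add h2
  refine h.congr_deriv (Eq.symm ?_)
  have hrq : rr k q = (rrS k q - 1) / (rrS k q + 1) := rfl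
  have h1r : 1 - rr k q = 2 / (rrS k q + 1) := by
    rw [hrq]; field_simp; ring
  rw [h1r, hrq]
  field_simp
  ring

lemma core_hasDerivAt (k d q : ℝ) (hk : 0 < k) (hq : 0 ≤ q) :
    HasDerivAt (fun t => k * d * (t * (1 - rr k t))
        + d * (rr k t / (1 - rr k t) + Real.log (1 - rr k t)))
      (k * d * (1 - rr k q)) q := by
  have hkq : 0 ≤ k * q := by positivity
  have hpos : 0 < 1 + 4 * (k * q) := by linarith
  have hs1 := rrS_one_le k q hkq
  have hs0 : rrS k q ≠ 0 := by linarith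
  have hs0' : rrS k q + 1 ≠ 0 := by linarith
  have hsq := rrS_sq k q hpos.le
  have hr := rr_hasDerivAt k q hkq hpos
  have hphi := phi_hasDerivAt k q hkq hpos
  have h1 : HasDerivAt (fun t => t * (1 - rr k t))
      (1 * (1 - rr k q) + q * (-(4 * k / (rrS k q * (rrS k q + 1) ^ 2)))) q :=
    (hasDerivAt_id q).mul (hr.const_sub 1)
  have h := (h1.const_mul (k * d)).add (hphi.const_mul d)
  refine h.congr_deriv (Eq.symm ?_)
  field_simp
  linear_combination (-d) * hsq

lemma RS_deriv1 (α β y q : ℝ) (hk2 : 0 < β ^ 2 * α) (hq : 0 ≤ q) :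
    HasDerivAt (fun t => RSfun α β t y)
      (β ^ 2 * α * (1 - α) / 2 * (y - rr (β ^ 2 * α) q)) q := by
  have hcore := core_hasDerivAt (β ^ 2 * α) ((1 - α) / 2) q hk2 hq
  have heq : (fun t => RSfun α β t y) = fun t =>
      (β ^ 2 * α * (1 - α) / 2 * (1 - t) * (1 - y)
        + (β ^ 2 * α * (1 - α) / 2 * (y * (1 - rr (β ^ 2 * (1 - α)) y))
          + α / 2 * (rr (β ^ 2 * (1 - α)) y / (1 - rr (β ^ 2 * (1 - α)) y)
            + Real.log (1 - rr (β ^ 2 * (1 - α)) y))))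
      + ((β ^ 2 * α) * ((1 - α) / 2) * (t * (1 - rr (β ^ 2 * α) t))
        + (1 - α) / 2 * (rr (β ^ 2 * α) t / (1 - rr (β ^ 2 * α) t)
          + Real.log (1 - rr (β ^ 2 * α) t))) := by
    funext t; unfold RSfun; ring
  rw [heq]
  have hlin : HasDerivAt (fun t : ℝ => β ^ 2 * α * (1 - α) / 2 * (1 - t) * (1 - y))
      (-(β ^ 2 * α * (1 - α) / 2 * (1 - y))) q := by
    have := (((hasDerivAt_id q).const_sub 1).const_mul (β ^ 2 * α * (1 - α) / 2)).mul_const (1 - y)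
    refine this.congr_deriv (Eq.symm ?_)
    ring
  have h := (hlin.add_const (β ^ 2 * α * (1 - α) / 2 * (y * (1 - rr (β ^ 2 * (1 - α)) y))
          + α / 2 * (rr (β ^ 2 * (1 - α)) y / (1 - rr (β ^ 2 * (1 - α)) y)
            + Real.log (1 - rr (β ^ 2 * (1 - α)) y)))).add hcore
  refine h.congr_deriv (Eq.symm ?_)
  ring

lemma RS_deriv2 (α β x q : ℝ) (hk1 : 0 < β ^ 2 * (1 - α)) (hq : 0 ≤ q) :
    HasDerivAt (fun t => RSfun α β x t)
      (β ^ 2 * α * (1 - α) / 2 * (x - rr (β ^ 2 * (1 - α)) q)) q := by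
  have hcore := core_hasDerivAt (β ^ 2 * (1 - α)) (α / 2) q hk1 hq
  have heq : (fun t => RSfun α β x t) = fun t =>
      ((β ^ 2 * α * (1 - α) / 2 * (1 - x)) * (1 - t)
        + (β ^ 2 * α * (1 - α) / 2 * (x * (1 - rr (β ^ 2 * α) x))
          + (1 - α) / 2 * (rr (β ^ 2 * α) x / (1 - rr (β ^ 2 * α) x)
            + Real.log (1 - rr (β ^ 2 * α) x))))
      + ((β ^ 2 * (1 - α)) * (α / 2) * (t * (1 - rr (β ^ 2 * (1 - α)) t))
        + α / 2 * (rr (β ^ 2 * (1 - α)) t / (1 - rr (β ^ 2 * (1 - α)) t)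
          + Real.log (1 - rr (β ^ 2 * (1 - α)) t))) := by
    funext t; unfold RSfun; ring
  rw [heq]
  have hlin : HasDerivAt (fun t : ℝ => (β ^ 2 * α * (1 - α) / 2 * (1 - x)) * (1 - t))
      (-(β ^ 2 * α * (1 - α) / 2 * (1 - x))) q := by
    have := ((hasDerivAt_id q).const_sub 1).const_mul (β ^ 2 * α * (1 - α) / 2 * (1 - x))
    refine this.congr_deriv (Eq.symm ?_)
    ring
  have h := (hlin.add_const (β ^ 2 * α * (1 - α) / 2 * (x * (1 - rr (β ^ 2 * α) x))
          + (1 - α) / 2 * (rr (β ^ 2 * α) x / (1 - rr (β ^ 2 * α) x)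
            + Real.log (1 - rr (β ^ 2 * α) x)))).add hcore
  refine h.congr_deriv (Eq.symm ?_)
  ring

lemma RS_derivg (α β q : ℝ) (hk1 : 0 < β ^ 2 * (1 - α)) (hk2 : 0 < β ^ 2 * α) (hq : 0 ≤ q) :
    HasDerivAt (fun t => RSfun α β (rr (β ^ 2 * (1 - α)) t) t)
      (β ^ 2 * α * (1 - α) / 2
        * (4 * (β ^ 2 * (1 - α)) / (rrS (β ^ 2 * (1 - α)) q * (rrS (β ^ 2 * (1 - α)) q + 1) ^ 2))
        * (q - rr (β ^ 2 * α) (rr (β ^ 2 * (1 - α)) q))) q := by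
  set k₁ := β ^ 2 * (1 - α) with hk₁def
  set k₂ := β ^ 2 * α with hk₂def
  have hkq : 0 ≤ k₁ * q := by positivity
  have hpos : 0 < 1 + 4 * (k₁ * q) := by linarith
  have hs1 := rrS_one_le k₁ q hkq
  have hs0 : rrS k₁ q ≠ 0 := by linarith
  have hs0' : rrS k₁ q + 1 ≠ 0 := by linarith
  have hsq := rrS_sq k₁ q hpos.le
  have hrpos : 0 ≤ rr k₁ q := rr_nonneg k₁ q hkq
  have hr := rr_hasDerivAt k₁ q hkq hpos
  have hphi := phi_hasDerivAt k₁ q hkq hpos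
  have hcoreB := core_hasDerivAt k₂ ((1 - α) / 2) (rr k₁ q) hk2 hrpos
  have hB := HasDerivAt.comp q hcoreB hr
  have hA := (hr.const_sub 1).const_mul (β ^ 2 * α * (1 - α) / 2)
  have heq : (fun t => RSfun α β (rr k₁ t) t) = fun t =>
      (β ^ 2 * α * (1 - α) / 2 * (1 - rr k₁ t)
        + (k₂ * ((1 - α) / 2) * (rr k₁ t * (1 - rr k₂ (rr k₁ t)))
          + (1 - α) / 2 * (rr k₂ (rr k₁ t) / (1 - rr k₂ (rr k₁ t))
            + Real.log (1 - rr k₂ (rr k₁ t)))))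
      + α / 2 * (rr k₁ t / (1 - rr k₁ t) + Real.log (1 - rr k₁ t)) := by
    funext t; unfold RSfun; ring
  rw [heq]
  have hB' : HasDerivAt (fun t => k₂ * ((1 - α) / 2) * (rr k₁ t * (1 - rr k₂ (rr k₁ t)))
          + (1 - α) / 2 * (rr k₂ (rr k₁ t) / (1 - rr k₂ (rr k₁ t))
            + Real.log (1 - rr k₂ (rr k₁ t))))
      (k₂ * ((1 - α) / 2) * (1 - rr k₂ (rr k₁ q)) * (4 * k₁ / (rrS k₁ q * (rrS k₁ q + 1) ^ 2))) q := by
    exact hB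
  have h := (hA.add hB').add (hphi.const_mul (α / 2))
  have hkey : q * (4 * k₁ / (rrS k₁ q * (rrS k₁ q + 1) ^ 2))
      = (rrS k₁ q - 1) / (rrS k₁ q * (rrS k₁ q + 1)) := by
    field_simp
    linear_combination (-1) * hsq
  refine h.congr_deriv (Eq.symm ?_)
  linear_combination (β ^ 2 * α * (1 - α) / 2) * hkey

/-- With `b₁ = b₂ = 0` and `β⁴α(1-α) < 1`, the origin is the unique stationary point of `RS`
in `[0,1)²`, and `RS(0,0) = min_{q₂} max_{q₁} RS(q₁,q₂)`. -/
theorem stmt12 (α β : ℝ) (hα : α ∈ Set.Ioo (0 : ℝ) 1) (hβ : 0 < β)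
    (hsmall : β ^ 4 * α * (1 - α) < 1) :
    let r₁ : ℝ → ℝ := fun q₂ =>
      (Real.sqrt (1 + 4 * (β ^ 2 * (1 - α) * q₂)) - 1) /
        (Real.sqrt (1 + 4 * (β ^ 2 * (1 - α) * q₂)) + 1)
    let r₂ : ℝ → ℝ := fun q₁ =>
      (Real.sqrt (1 + 4 * (β ^ 2 * α * q₁)) - 1) /
        (Real.sqrt (1 + 4 * (β ^ 2 * α * q₁)) + 1)
    let RS : ℝ → ℝ → ℝ := fun q₁ q₂ =>
      β ^ 2 * α * (1 - α) / 2 * (1 - q₁) * (1 - q₂)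
      + β ^ 2 * α * (1 - α) / 2 * (q₂ * (1 - r₁ q₂) + q₁ * (1 - r₂ q₁))
      + α / 2 * (r₁ q₂ / (1 - r₁ q₂) + Real.log (1 - r₁ q₂))
      + (1 - α) / 2 * (r₂ q₁ / (1 - r₂ q₁) + Real.log (1 - r₂ q₁))
    (deriv (fun t => RS t 0) 0 = 0 ∧ deriv (fun t => RS 0 t) 0 = 0) ∧
      (∀ p : ℝ × ℝ, p.1 ∈ Set.Ico (0 : ℝ) 1 → p.2 ∈ Set.Ico (0 : ℝ) 1 →
        deriv (fun t => RS t p.2) p.1 = 0 → deriv (fun t => RS p.1 t) p.2 = 0 →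
        p = (0, 0)) ∧
      RS 0 0 =
        sInf ((fun q₂ => sSup ((fun q₁ => RS q₁ q₂) '' Set.Ico 0 1)) '' Set.Ico 0 1) := by
  obtain ⟨hα0, hα1⟩ := hα
  intro r₁ r₂ RS
  have hRS : RS = RSfun α β := rfl
  have hk1 : 0 < β ^ 2 * (1 - α) := mul_pos (pow_pos hβ 2) (by linarith)
  have hk2 : 0 < β ^ 2 * α := mul_pos (pow_pos hβ 2) hα0
  have hc : 0 < β ^ 2 * α * (1 - α) / 2 := by
    have := mul_pos hk2 (show (0:ℝ) < 1 - α by linarith); linarith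
  have hkk : β ^ 2 * (1 - α) * (β ^ 2 * α) < 1 := by
    have : β ^ 2 * (1 - α) * (β ^ 2 * α) = β ^ 4 * α * (1 - α) := by ring
    linarith
  -- derivative values
  have hd1 : ∀ y q : ℝ, 0 ≤ q → deriv (fun t => RSfun α β t y) q
      = β ^ 2 * α * (1 - α) / 2 * (y - rr (β ^ 2 * α) q) :=
    fun y q hq => (RS_deriv1 α β y q hk2 hq).deriv
  have hd2 : ∀ x q : ℝ, 0 ≤ q → deriv (fun t => RSfun α β x t) q
      = β ^ 2 * α * (1 - α) / 2 * (x - rr (β ^ 2 * (1 - α)) q) :=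
    fun x q hq => (RS_deriv2 α β x q hk1 hq).deriv
  refine ⟨⟨?_, ?_⟩, ?_, ?_⟩
  · rw [hRS, hd1 0 0 le_rfl, rr_zero]; ring
  · rw [hRS, hd2 0 0 le_rfl, rr_zero]; ring
  · rintro ⟨p1, p2⟩ hp1 hp2 hder1 hder2
    rw [hRS] at hder1 hder2
    rw [hd1 p2 p1 hp1.1] at hder1
    rw [hd2 p1 p2 hp2.1] at hder2
    have e1 : p2 = rr (β ^ 2 * α) p1 := by
      rcases mul_eq_zero.mp hder1 with h | h
      · exact absurd h (ne_of_gt hc)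
      · linarith
    have e2 : p1 = rr (β ^ 2 * (1 - α)) p2 := by
      rcases mul_eq_zero.mp hder2 with h | h
      · exact absurd h (ne_of_gt hc)
      · linarith
    have hb1 : rr (β ^ 2 * α) p1 ≤ (β ^ 2 * α) * p1 := rr_le (β ^ 2 * α) p1 (mul_nonneg hk2.le hp1.1)
    have hb2 : rr (β ^ 2 * (1 - α)) p2 ≤ (β ^ 2 * (1 - α)) * p2 := rr_le (β ^ 2 * (1 - α)) p2 (mul_nonneg hk1.le hp2.1)
    have hchain : p1 ≤ (β ^ 2 * (1 - α)) * (β ^ 2 * α) * p1 := by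
      calc p1 = rr (β ^ 2 * (1 - α)) p2 := e2
        _ ≤ (β ^ 2 * (1 - α)) * p2 := hb2
        _ = (β ^ 2 * (1 - α)) * rr (β ^ 2 * α) p1 := by rw [e1]
        _ ≤ (β ^ 2 * (1 - α)) * ((β ^ 2 * α) * p1) := mul_le_mul_of_nonneg_left hb1 hk1.le
        _ = (β ^ 2 * (1 - α)) * (β ^ 2 * α) * p1 := by ring
    have hp1le : p1 ≤ 0 := by nlinarith [hchain, hkk]
    have hp1z : p1 = 0 := le_antisymm hp1le hp1.1
    have hp2z : p2 = 0 := by rw [e1, hp1z, rr_zero]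
    simp [hp1z, hp2z, Prod.ext_iff]
  · -- min-max
    rw [hRS]
    have hcont : ∀ y : ℝ, ContinuousOn (fun t => RSfun α β t y) (Set.Icc 0 1) :=
      fun y x hx => ((RS_deriv1 α β y x hk2 hx.1).continuousAt).continuousWithinAt
    have hbdd : ∀ y : ℝ, BddAbove ((fun q₁ => RSfun α β q₁ y) '' Set.Ico 0 1) := by
      intro y
      exact (isCompact_Icc.bddAbove_image (hcont y)).mono
        (Set.image_mono Set.Ico_subset_Icc_self)
    -- antitone in q₁ at y = 0
    have hanti : AntitoneOn (fun t => RSfun α β t 0) (Set.Icc 0 1) := by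
      apply antitoneOn_of_deriv_nonpos (convex_Icc 0 1) (hcont 0)
      · intro x hx
        rw [interior_Icc] at hx
        exact (RS_deriv1 α β 0 x hk2 hx.1.le).differentiableAt.differentiableWithinAt
      · intro x hx
        rw [interior_Icc] at hx
        rw [hd1 0 x hx.1.le]
        have h1 := rr_nonneg (β ^ 2 * α) x (mul_nonneg hk2.le hx.1.le)
        nlinarith [mul_nonneg hc.le h1]
    have hsup0 : sSup ((fun q₁ => RSfun α β q₁ 0) '' Set.Ico 0 1) = RSfun α β 0 0 := by
      apply IsGreatest.csSup_eq
      constructor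
      · exact ⟨0, ⟨le_rfl, zero_lt_one⟩, rfl⟩
      · rintro v ⟨x, hx, rfl⟩
        exact hanti ⟨le_rfl, zero_le_one⟩ ⟨hx.1, hx.2.le⟩ hx.1
    -- monotone along q₂ ↦ RS(r₁(q₂), q₂)
    have hmono : MonotoneOn (fun t => RSfun α β (rr (β ^ 2 * (1 - α)) t) t) (Set.Icc 0 1) := by
      apply monotoneOn_of_deriv_nonneg (convex_Icc 0 1)
      · intro x hx
        exact ((RS_derivg α β x hk1 hk2 hx.1).continuousAt).continuousWithinAt
      · intro x hx
        rw [interior_Icc] at hx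
        exact (RS_derivg α β x hk1 hk2 hx.1.le).differentiableAt.differentiableWithinAt
      · intro x hx
        rw [interior_Icc] at hx
        rw [(RS_derivg α β x hk1 hk2 hx.1.le).deriv]
        have hs1 := rrS_one_le (β ^ 2 * (1 - α)) x (mul_nonneg hk1.le hx.1.le)
        have hr1 : 0 ≤ rr (β ^ 2 * (1 - α)) x := rr_nonneg (β ^ 2 * (1 - α)) x (mul_nonneg hk1.le hx.1.le)
        have hb1 : rr (β ^ 2 * α) (rr (β ^ 2 * (1 - α)) x) ≤ (β ^ 2 * α) * rr (β ^ 2 * (1 - α)) x := rr_le (β ^ 2 * α) (rr (β ^ 2 * (1 - α)) x) (mul_nonneg hk2.le hr1)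
        have hb2 : rr (β ^ 2 * (1 - α)) x ≤ (β ^ 2 * (1 - α)) * x := rr_le (β ^ 2 * (1 - α)) x (mul_nonneg hk1.le hx.1.le)
        have hle : rr (β ^ 2 * α) (rr (β ^ 2 * (1 - α)) x) ≤ x := by
          nlinarith [mul_le_mul_of_nonneg_left hb2 hk2.le,
            mul_nonneg (sub_nonneg.mpr hkk.le) hx.1.le]
        have hD : (0:ℝ) ≤ 4 * (β ^ 2 * (1 - α)) / (rrS (β ^ 2 * (1 - α)) x * (rrS (β ^ 2 * (1 - α)) x + 1) ^ 2) :=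
          div_nonneg (by linarith) (le_of_lt (mul_pos (by linarith) (pow_pos (by linarith) 2)))
        have hx2 : 0 ≤ x - rr (β ^ 2 * α) (rr (β ^ 2 * (1 - α)) x) := by linarith
        exact mul_nonneg (mul_nonneg hc.le hD) hx2
    have hg0 : RSfun α β (rr (β ^ 2 * (1 - α)) 0) 0 = RSfun α β 0 0 := by rw [rr_zero]
    -- lower bound for each inner sup
    have hlow : ∀ y ∈ Set.Ico (0:ℝ) 1,
        RSfun α β 0 0 ≤ sSup ((fun q₁ => RSfun α β q₁ y) '' Set.Ico 0 1) := by
      intro y hy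
      have hyk : (0:ℝ) ≤ (β ^ 2 * (1 - α)) * y := mul_nonneg hk1.le hy.1
      have hmem : rr (β ^ 2 * (1 - α)) y ∈ Set.Ico (0:ℝ) 1 := ⟨rr_nonneg (β ^ 2 * (1 - α)) y hyk, rr_lt_one (β ^ 2 * (1 - α)) y hyk⟩
      have h1 : RSfun α β (rr (β ^ 2 * (1 - α)) y) y ≤ sSup ((fun q₁ => RSfun α β q₁ y) '' Set.Ico 0 1) :=
        le_csSup (hbdd y) ⟨rr (β ^ 2 * (1 - α)) y, hmem, rfl⟩
      have h2 : RSfun α β 0 0 ≤ RSfun α β (rr (β ^ 2 * (1 - α)) y) y := by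
        rw [← hg0]
        exact hmono ⟨le_rfl, zero_le_one⟩ ⟨hy.1, hy.2.le⟩ hy.1
      linarith
    symm
    apply IsLeast.csInf_eq
    constructor
    · exact ⟨0, ⟨le_rfl, zero_lt_one⟩, hsup0⟩
    · rintro v ⟨y, hy, rfl⟩
      exact hlow y hy
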